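/- For every t with 0 < t < π and every s with 0 < s ≤ 1, one has cot(t) ≤ s·cot(t·s), with equality if and only if s = 1. -/

import Mathlib

open Real Set

/-- For `0 < t < π` and `0 < s ≤ 1`, one has `cot t ≤ s · cot (t·s)`,
with equality if and only if `s = 1`. -/
theorem cot_le_smul_cot (t s : ℝ) (ht : t ∈ Set.Ioo 0 π) (hs : s ∈ Set.Ioc (0:ℝ) 1) :
    Real.cot t ≤ s * Real.cot (t * s) ∧
    (Real.cot t = s * Real.cot (t * s) ↔ s = 1) := by
  obtain ⟨ht0, htπ⟩ := ht
  obtain ⟨hs0, hs1⟩ := hs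
  set g : ℝ → ℝ := fun x => x * Real.cot (t * x) with hg
  have key : ∀ x ∈ Set.Ioc (0:ℝ) 1, HasDerivAt g
      (1 * Real.cot (t * x) + x * (-1 / Real.sin (t * x) ^ 2 * (t * 1))) x := by
    intro x hx
    have hu0 : 0 < t * x := mul_pos ht0 hx.1
    have huπ : t * x < π := by nlinarith [hx.2]
    have hsin : 0 < Real.sin (t * x) := Real.sin_pos_of_pos_of_lt_pi hu0 huπ
    have hcot : HasDerivAt Real.cot (-1 / Real.sin (t * x) ^ 2) (t * x) := by
      have h := (Real.hasDerivAt_cos (t * x)).div (Real.hasDerivAt_sin (t * x)) hsin.ne'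
      have hfun : (Real.cos / Real.sin) = Real.cot :=
        funext fun y => (Real.cot_eq_cos_div_sin y).symm
      rw [hfun] at h
      refine h.congr_deriv ?_
      have hpy := Real.sin_sq_add_cos_sq (t * x)
      rw [div_left_inj' (pow_ne_zero 2 hsin.ne')]
      nlinarith [hpy]
    have hin : HasDerivAt (fun y => Real.cot (t * y))
        (-1 / Real.sin (t * x) ^ 2 * (t * 1)) x :=
      hcot.comp x ((hasDerivAt_id x).const_mul t)
    exact (hasDerivAt_id x).mul hin
  have hanti : StrictAntiOn g (Set.Ioc 0 1) := by
    apply strictAntiOn_of_deriv_neg (convex_Ioc 0 1)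
    · exact fun x hx => (key x hx).continuousAt.continuousWithinAt
    · intro x hx
      rw [interior_Ioc] at hx
      have hx' : x ∈ Set.Ioc (0:ℝ) 1 := ⟨hx.1, hx.2.le⟩
      rw [(key x hx').deriv]
      have hu0 : 0 < t * x := mul_pos ht0 hx.1
      have huπ : t * x < π := by nlinarith [hx.2]
      have hsin : 0 < Real.sin (t * x) := Real.sin_pos_of_pos_of_lt_pi hu0 huπ
      have hlt : 2 * Real.sin (t * x) * Real.cos (t * x) < 2 * (t * x) := by
        have h2 := Real.sin_lt (show (0:ℝ) < 2 * (t * x) by positivity)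
        rw [Real.sin_two_mul] at h2
        linarith
      have heq : 1 * Real.cot (t * x) + x * (-1 / Real.sin (t * x) ^ 2 * (t * 1))
          = (Real.sin (t * x) * Real.cos (t * x) - t * x) / Real.sin (t * x) ^ 2 := by
        rw [Real.cot_eq_cos_div_sin]
        field_simp
        ring
      rw [heq]
      apply div_neg_of_neg_of_pos
      · linarith
      · positivity
  rcases eq_or_lt_of_le hs1 with h1 | h1
  · subst h1
    simp
  · have hlt : Real.cot t < s * Real.cot (t * s) := by
      have h := hanti ⟨hs0, hs1⟩ ⟨one_pos, le_refl 1⟩ h1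
      simpa [hg] using h
    exact ⟨hlt.le, fun h => absurd h hlt.ne, fun h => absurd h h1.ne⟩
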